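/- Let 1 → N → Γ → Q → 1 be a short exact sequence of finitely generated groups where Q has no non-trivial finite quotients and H₂(Q,ℤ) = 0. Then the inclusion N ↪ Γ induces an isomorphism of profinite completions N̂ → Γ̂. -/

import Mathlib

section ProfiniteCompletionDef

/-- The index category for the profinite completion of `G`: finite-index
normal subgroups of `G`. -/
def FinIndexNormalSubgroup (G : Type) [Group G] : Type :=
  {K : Subgroup G // K.Normal ∧ K.FiniteIndex}

/-- The finite quotient of `G` by a finite-index normal subgroup. -/
def FinQuot {G : Type} [Group G] (K : FinIndexNormalSubgroup G) : Type :=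
  G ⧸ K.1

instance {G : Type} [Group G] (K : FinIndexNormalSubgroup G) : Group (FinQuot K) :=
  @QuotientGroup.Quotient.group G _ K.1 K.2.1

/-- The transition map `G/K → G/L` for `K ≤ L`. -/
def finQuotTransition {G : Type} [Group G] (K L : FinIndexNormalSubgroup G)
    (h : K.1 ≤ L.1) : FinQuot K →* FinQuot L :=
  letI := K.2.1; letI := L.2.1
  QuotientGroup.map K.1 L.1 (MonoidHom.id G) (fun _ hx => h hx)

/-- The profinite completion of `G`, realised as the inverse limit of the
finite quotients `G/K` over the finite-index normal subgroups `K` of `G`: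
the subgroup of the product `∀ K, G/K` consisting of the compatible families. -/
def profiniteCompletion (G : Type) [Group G] :
    Subgroup (∀ K : FinIndexNormalSubgroup G, FinQuot K) where
  carrier := {x | ∀ (K L : FinIndexNormalSubgroup G) (h : K.1 ≤ L.1),
    finQuotTransition K L h (x K) = x L}
  one_mem' := by intro K L h; simp [map_one]
  mul_mem' := by intro a b ha hb K L h; simp [map_mul, ha K L h, hb K L h]
  inv_mem' := by intro a ha K L h; simp [map_inv, ha K L h]

/-- The comap of a finite-index normal subgroup along a homomorphism is a
finite-index normal subgroup. -/
def comapFinIndexNormal {H G : Type} [Group H] [Group G] (φ : H →* G)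
    (K : FinIndexNormalSubgroup G) : FinIndexNormalSubgroup H :=
  ⟨K.1.comap φ, K.2.1.comap φ, by
    constructor
    rw [Subgroup.index_comap]
    intro h0
    exact K.2.2.index_ne_zero
      (Nat.eq_zero_of_zero_dvd (h0 ▸ (@Subgroup.relIndex_dvd_index_of_normal _ _ K.1 φ.range K.2.1)))⟩

/-- The map on profinite completions induced by a homomorphism `φ : H → G`. -/
def profiniteCompletionMap {H G : Type} [Group H] [Group G] (φ : H →* G) :
    profiniteCompletion H →* profiniteCompletion G where
  toFun x := ⟨fun K =>
      letI := (comapFinIndexNormal φ K).2.1; letI := K.2.1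
      QuotientGroup.map _ K.1 φ (fun _ hx => hx) (x.1 (comapFinIndexNormal φ K)),
    by
      intro K L h
      have hx := x.2 (comapFinIndexNormal φ K) (comapFinIndexNormal φ L)
        (fun _ hy => h hy)
      letI := K.2.1; letI := L.2.1
      letI := (comapFinIndexNormal φ K).2.1; letI := (comapFinIndexNormal φ L).2.1
      obtain ⟨g, hg⟩ := QuotientGroup.mk_surjective (x.1 (comapFinIndexNormal φ K))
      have hL : x.1 (comapFinIndexNormal φ L) = QuotientGroup.mk g := by
        rw [← hx, ← hg]; rfl
      show finQuotTransition K L h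
          (QuotientGroup.map _ K.1 φ (fun _ hx => hx) (x.1 (comapFinIndexNormal φ K))) =
        QuotientGroup.map _ L.1 φ (fun _ hx => hx) (x.1 (comapFinIndexNormal φ L))
      rw [← hg, hL]
      rfl⟩
  map_one' := by
    ext K
    letI := (comapFinIndexNormal φ K).2.1; letI := K.2.1
    simp
    exact map_one _
  map_mul' := fun a b => by
    ext K
    letI := (comapFinIndexNormal φ K).2.1; letI := K.2.1
    obtain ⟨g, hg⟩ := QuotientGroup.mk_surjective (a.1 (comapFinIndexNormal φ K))
    obtain ⟨g', hg'⟩ := QuotientGroup.mk_surjective (b.1 (comapFinIndexNormal φ K))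
    simp only [Subgroup.coe_mul, Pi.mul_apply, ← hg, ← hg', map_mul]
    exact (map_mul (QuotientGroup.map (Subgroup.comap φ K.1) K.1 φ (fun _ hx => hx)) (g : H ⧸ (comapFinIndexNormal φ K).1) g').trans (by rw [hg, hg']; rfl)

end ProfiniteCompletionDef
section GeneralCriterion

variable {H G : Type} [Group H] [Group G]

/-- The canonical map `H/(φ⁻¹K) → G/K`. -/
def quotMap (φ : H →* G) (K : FinIndexNormalSubgroup G) :
    FinQuot (comapFinIndexNormal φ K) →* FinQuot K :=
  letI := (comapFinIndexNormal φ K).2.1; letI := K.2.1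
  QuotientGroup.map _ K.1 φ (fun _ hx => hx)

lemma profiniteCompletionMap_apply (φ : H →* G) (x : profiniteCompletion H)
    (K : FinIndexNormalSubgroup G) :
    (profiniteCompletionMap φ x).1 K = quotMap φ K (x.1 (comapFinIndexNormal φ K)) := rfl

lemma quotMap_injective (φ : H →* G) (K : FinIndexNormalSubgroup G) :
    Function.Injective (quotMap φ K) := by
  letI := (comapFinIndexNormal φ K).2.1; letI := K.2.1
  intro a b hab
  obtain ⟨m, rfl⟩ := QuotientGroup.mk_surjective a
  obtain ⟨n, rfl⟩ := QuotientGroup.mk_surjective b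
  have h1 : (QuotientGroup.mk (φ m) : G ⧸ K.1) = QuotientGroup.mk (φ n) := hab
  rw [QuotientGroup.eq] at h1
  show (QuotientGroup.mk m : H ⧸ (comapFinIndexNormal φ K).1) = QuotientGroup.mk n
  rw [QuotientGroup.eq]
  show φ (m⁻¹ * n) ∈ K.1
  simpa [map_mul, map_inv] using h1

lemma finQuotTransition_mk {K L : FinIndexNormalSubgroup G} (h : K.1 ≤ L.1) (g : G) :
    finQuotTransition K L h (QuotientGroup.mk g) = QuotientGroup.mk g := rfl

lemma bijective_of_conditions (φ : H →* G)
    (ha : ∀ (K : FinIndexNormalSubgroup G) (g : G), ∃ h : H, (φ h)⁻¹ * g ∈ K.1)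
    (hb : ∀ M : FinIndexNormalSubgroup H, ∃ K : FinIndexNormalSubgroup G,
      K.1.comap φ ≤ M.1) :
    Function.Bijective (profiniteCompletionMap φ) := by
  classical
  constructor
  · intro x y hxy
    refine Subtype.ext (funext fun M => ?_)
    obtain ⟨K, hK⟩ := hb M
    have h1 : x.1 (comapFinIndexNormal φ K) = y.1 (comapFinIndexNormal φ K) := by
      apply quotMap_injective φ K
      have h2 := congrArg (fun z => z.1 K) hxy
      simpa [profiniteCompletionMap_apply] using h2
    have hx := x.2 (comapFinIndexNormal φ K) M hK
    have hy := y.2 (comapFinIndexNormal φ K) M hK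
    rw [← hx, ← hy, h1]
  · intro y
    choose K hK using hb
    have hrep : ∀ K0 : FinIndexNormalSubgroup G, ∃ h : H,
        (QuotientGroup.mk (φ h) : FinQuot K0) = y.1 K0 := by
      intro K0
      letI := K0.2.1
      obtain ⟨g, hg⟩ := QuotientGroup.mk_surjective (y.1 K0)
      obtain ⟨h, hh⟩ := ha K0 g
      refine ⟨h, ?_⟩
      rw [← hg]
      exact (QuotientGroup.eq).mpr hh
    choose rep hrep using hrep
    -- compatibility of representatives along transitions
    have hcomp : ∀ (K1 K2 : FinIndexNormalSubgroup G), K1.1 ≤ K2.1 →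
        (φ (rep K1))⁻¹ * φ (rep K2) ∈ K2.1 := by
      intro K1 K2 h
      have h2 := y.2 K1 K2 h
      rw [← hrep K1, finQuotTransition_mk, ← hrep K2] at h2
      letI := K2.2.1
      exact (QuotientGroup.eq).mp h2
    -- key: for any K1, K2, the reps agree modulo comap φ K1 ⊔ comap φ K2
    have hkey : ∀ (K1 K2 : FinIndexNormalSubgroup G) (M' : Subgroup H),
        K1.1.comap φ ≤ M' → K2.1.comap φ ≤ M' → (rep K1)⁻¹ * rep K2 ∈ M' := by
      intro K1 K2 M' h1 h2
      letI i1 := K1.2.1; letI i2 := K2.2.1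
      letI i3 := K1.2.2; letI i4 := K2.2.2
      have hn : (K1.1 ⊓ K2.1).Normal := Subgroup.normal_inf_normal K1.1 K2.1
      have hf : (K1.1 ⊓ K2.1).FiniteIndex := inferInstance
      set Kin : FinIndexNormalSubgroup G := ⟨K1.1 ⊓ K2.1, hn, hf⟩
      have e1 : (φ (rep Kin))⁻¹ * φ (rep K1) ∈ K1.1 := hcomp Kin K1 inf_le_left
      have e2 : (φ (rep Kin))⁻¹ * φ (rep K2) ∈ K2.1 := hcomp Kin K2 inf_le_right
      have m1 : (rep Kin)⁻¹ * rep K1 ∈ M' := h1 (by simpa [Subgroup.mem_comap] using e1)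
      have m2 : (rep Kin)⁻¹ * rep K2 ∈ M' := h2 (by simpa [Subgroup.mem_comap] using e2)
      have : ((rep Kin)⁻¹ * rep K1)⁻¹ * ((rep Kin)⁻¹ * rep K2) ∈ M' := M'.mul_mem (M'.inv_mem m1) m2
      simpa [mul_assoc] using this
    refine ⟨⟨fun M => QuotientGroup.mk (rep (K M)), ?_⟩, ?_⟩
    · intro M M' h
      show finQuotTransition M M' h (QuotientGroup.mk (rep (K M))) = QuotientGroup.mk (rep (K M'))
      rw [finQuotTransition_mk]
      letI := M'.2.1
      exact (QuotientGroup.eq).mpr (hkey (K M) (K M') M'.1 ((hK M).trans h) (hK M'))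
    · refine Subtype.ext (funext fun K0 => ?_)
      rw [profiniteCompletionMap_apply]
      set M := comapFinIndexNormal φ K0
      show quotMap φ K0 (QuotientGroup.mk (rep (K M))) = y.1 K0
      have : quotMap φ K0 (QuotientGroup.mk (rep (K M))) =
          (QuotientGroup.mk (φ (rep (K M))) : FinQuot K0) := rfl
      rw [this, ← hrep K0]
      letI := K0.2.1
      refine (QuotientGroup.eq).mpr ?_
      have := hkey (K M) K0 (K0.1.comap φ) (hK M) le_rfl
      simpa [Subgroup.mem_comap, map_mul, map_inv] using this

end GeneralCriterion
section Conditions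

variable {Γ : Type} [Group Γ]

lemma condition_a (N : Subgroup Γ) [N.Normal]
    (hQ : ∀ (L : Subgroup (Γ ⧸ N)), L.Normal → L.FiniteIndex → L = ⊤)
    (K : FinIndexNormalSubgroup Γ) (g : Γ) :
    ∃ n : ↥N, (N.subtype n)⁻¹ * g ∈ K.1 := by
  letI := K.2.1; letI := K.2.2
  set J : Subgroup (Γ ⧸ N) := K.1.map (QuotientGroup.mk' N) with hJ
  have hJn : J.Normal := Subgroup.Normal.map K.2.1 _ (QuotientGroup.mk'_surjective N)
  have hJf : J.FiniteIndex := by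
    constructor
    intro h0
    have hdvd : J.index ∣ K.1.index := Subgroup.index_map_dvd _ (QuotientGroup.mk'_surjective N)
    rw [h0] at hdvd
    exact K.2.2.index_ne_zero (Nat.eq_zero_of_zero_dvd hdvd)
  have hJtop : J = ⊤ := hQ J hJn hJf
  have hg : QuotientGroup.mk' N g ∈ J := hJtop ▸ Subgroup.mem_top _
  obtain ⟨k, hk, hkg⟩ := hg
  have hN : k⁻¹ * g ∈ N := by
    have := (QuotientGroup.eq).mp hkg
    simpa using this
  refine ⟨⟨k⁻¹ * g, hN⟩, ?_⟩
  show (k⁻¹ * g)⁻¹ * g ∈ K.1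
  have : (k⁻¹ * g)⁻¹ * g = g⁻¹ * k * g := by group
  rw [this]
  exact (Subgroup.Normal.mem_comm_iff K.2.1).mp (by simpa [mul_assoc] using hk)

end Conditions
section ConditionB

lemma finite_monoidHom {A B : Type*} [Group A] [Group B] (hA : Group.FG A) [Finite B] :
    Finite (A →* B) := by
  obtain ⟨S, hScl, hSfin⟩ := Group.fg_iff.mp hA
  haveI : Finite ↥S := hSfin
  refine Finite.of_injective (fun f : A →* B => (fun s : S => f s)) ?_
  intro f g hfg
  refine MonoidHom.eq_of_eqOn_dense hScl ?_
  intro s hs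
  exact congrFun hfg ⟨s, hs⟩

variable {Γ : Type} [Group Γ]

lemma condition_b (N : Subgroup Γ) [N.Normal] (hNfg : Group.FG ↥N)
    (hQ : ∀ (L : Subgroup (Γ ⧸ N)), L.Normal → L.FiniteIndex → L = ⊤)
    (hsuper : ∀ (M : Type) [Group M] (φ : M →* (Γ ⧸ N)), Function.Surjective φ →
      φ.ker ≤ Subgroup.center M → ∃ s : (Γ ⧸ N) →* M, φ.comp s = MonoidHom.id (Γ ⧸ N))
    (M : Subgroup ↥N) (hMn : M.Normal) (hMf : M.FiniteIndex) :
    ∃ K : Subgroup Γ, K.Normal ∧ K.FiniteIndex ∧ K.comap N.subtype ≤ M := by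
  classical
  letI := hMn
  haveI := hMf
  -- Step 1: a characteristic finite-index subgroup M₀ ≤ M
  haveI : Finite (↥N ⧸ M) := inferInstance
  haveI : Finite (↥N →* (↥N ⧸ M)) := finite_monoidHom hNfg
  set M₀ : Subgroup ↥N := ⨅ (f : ↥N →* (↥N ⧸ M)), f.ker with hM₀
  haveI hM₀f : M₀.FiniteIndex := Subgroup.finiteIndex_iInf (fun f => inferInstance)
  have hM₀M : M₀ ≤ M := by
    have h1 : M₀ ≤ (QuotientGroup.mk' M).ker := iInf_le _ (QuotientGroup.mk' M)
    rwa [QuotientGroup.ker_mk'] at h1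
  have hM₀mem : ∀ n : ↥N, n ∈ M₀ ↔ ∀ f : ↥N →* (↥N ⧸ M), f n = 1 := by
    intro n
    simp [hM₀, Subgroup.mem_iInf, MonoidHom.mem_ker]
  -- M₀ is invariant under conjugation by Γ
  have hM₀inv : ∀ (g : Γ) (n : ↥N), n ∈ M₀ → (MulAut.conjNormal g n : ↥N) ∈ M₀ := by
    intro g n hn
    rw [hM₀mem] at hn ⊢
    intro f
    exact hn (f.comp (MulAut.conjNormal g).toMonoidHom)
  -- Step 2: M₀' = image of M₀ in Γ, a normal subgroup of Γ
  set M₀' : Subgroup Γ := M₀.map N.subtype with hM₀'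
  have hM₀'N : M₀' ≤ N := by
    rintro x ⟨n, hn, rfl⟩
    exact n.2
  haveI hM₀'n : M₀'.Normal := by
    constructor
    intro x hx g
    obtain ⟨n, hn, rfl⟩ := hx
    refine ⟨MulAut.conjNormal g n, hM₀inv g n hn, ?_⟩
    simp [MulAut.conjNormal_apply]
  -- Step 3: quotient Γ₁ = Γ/M₀', finite normal subgroup F = N/M₀
  set π : Γ →* Γ ⧸ M₀' := QuotientGroup.mk' M₀' with hπ
  set F : Subgroup (Γ ⧸ M₀') := N.map π with hF
  haveI hFn : F.Normal := Subgroup.Normal.map inferInstance π (QuotientGroup.mk'_surjective M₀')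
  set ρ : ↥N →* Γ ⧸ M₀' := π.comp N.subtype with hρ
  have hρrange : ρ.range = F := by
    rw [hρ, MonoidHom.range_comp, N.range_subtype]
  have hρker : ρ.ker = M₀ := by
    rw [hρ, ← MonoidHom.comap_ker, hπ, QuotientGroup.ker_mk', hM₀']
    exact Subgroup.comap_map_eq_self_of_injective N.subtype_injective M₀
  haveI : Finite (↥N ⧸ M₀) := inferInstance
  haveI hq : Finite (↥N ⧸ ρ.ker) := by
    rw [hρker]
    exact inferInstanceAs (Finite (↥N ⧸ M₀))
  haveI hFfin : Finite ↥F := by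
    rw [← hρrange]
    exact Finite.of_equiv _ (QuotientGroup.quotientKerEquivRange ρ).toEquiv
  -- the map ψ : Γ₁ → Q
  set ψ : (Γ ⧸ M₀') →* (Γ ⧸ N) := QuotientGroup.map M₀' N (MonoidHom.id Γ)
    (by simpa using hM₀'N) with hψ
  have hψmk : ∀ g : Γ, ψ (QuotientGroup.mk g) = QuotientGroup.mk g := fun g => rfl
  have hψsurj : Function.Surjective ψ := by
    intro q
    obtain ⟨g, rfl⟩ := QuotientGroup.mk_surjective q
    exact ⟨QuotientGroup.mk g, rfl⟩
  have hψker : ∀ x : Γ ⧸ M₀', x ∈ F ↔ ψ x = 1 := by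
    intro x
    obtain ⟨g, rfl⟩ := QuotientGroup.mk_surjective x
    rw [hψmk, QuotientGroup.eq_one_iff]
    constructor
    · rintro ⟨n, hn, hng⟩
      have hng' : (QuotientGroup.mk n : Γ ⧸ M₀') = QuotientGroup.mk g := hng
      have h1 : n⁻¹ * g ∈ M₀' := (QuotientGroup.eq).mp hng'
      simpa using N.mul_mem hn (hM₀'N h1)
    · intro h2
      exact ⟨g, h2, rfl⟩
  -- Step 4: the centralizer C of F is normal of finite index
  set C : Subgroup (Γ ⧸ M₀') := Subgroup.centralizer (F : Set (Γ ⧸ M₀')) with hC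
  set χ : (Γ ⧸ M₀') →* MulAut ↥F := MulAut.conjNormal with hχ
  haveI : Finite (↥F ≃ ↥F) := inferInstance
  haveI : Finite (MulAut ↥F) :=
    Finite.of_injective (fun e : MulAut ↥F => (e : ↥F → ↥F)) DFunLike.coe_injective
  have hCeq : C = χ.ker := by
    ext g
    rw [hC, MonoidHom.mem_ker, Subgroup.mem_centralizer_iff]
    constructor
    · intro h
      refine DFunLike.ext _ _ fun f => Subtype.ext ?_
      have h1 : (f : Γ ⧸ M₀') * g = g * f := h f f.2
      show ((χ g f : ↥F) : Γ ⧸ M₀') = f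
      rw [hχ, MulAut.conjNormal_apply, ← h1, mul_assoc, mul_inv_cancel, mul_one]
    · intro hg h hF
      have h1 := congrArg Subtype.val (DFunLike.congr_fun hg ⟨h, hF⟩)
      have h2 : g * h * g⁻¹ = h := by
        rw [hχ] at h1
        simpa [MulAut.conjNormal_apply] using h1
      have h3 : g * h = h * g := mul_inv_eq_iff_eq_mul.mp h2
      exact h3.symm
  haveI hCfin : C.FiniteIndex := by
    rw [hCeq]
    infer_instance
  haveI hCnorm : C.Normal := by
    constructor
    intro c hc g
    rw [hC, Subgroup.mem_centralizer_iff] at hc ⊢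
    intro h hhF
    have h' : g⁻¹ * h * g ∈ F := by
      have := hFn.conj_mem h hhF g⁻¹
      simpa [mul_assoc] using this
    have h1 := hc _ h'
    calc h * (g * c * g⁻¹) = g * ((g⁻¹ * h * g) * c) * g⁻¹ := by group
      _ = g * (c * (g⁻¹ * h * g)) * g⁻¹ := by rw [h1]
      _ = (g * c * g⁻¹) * h := by group
  -- Step 5: C surjects onto Q
  have hJtop : C.map ψ = ⊤ := by
    refine hQ _ (Subgroup.Normal.map hCnorm ψ hψsurj) ?_
    constructor
    intro h0
    have hdvd : (C.map ψ).index ∣ C.index := Subgroup.index_map_dvd _ hψsurj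
    rw [h0] at hdvd
    exact hCfin.index_ne_zero (Nat.eq_zero_of_zero_dvd hdvd)
  set φC : ↥C →* (Γ ⧸ N) := ψ.comp C.subtype with hφC
  have hφCsurj : Function.Surjective φC := by
    intro q
    have : q ∈ C.map ψ := hJtop ▸ Subgroup.mem_top q
    obtain ⟨c, hc, hcq⟩ := this
    exact ⟨⟨c, hc⟩, hcq⟩
  have hφCker : φC.ker ≤ Subgroup.center ↥C := by
    intro x hx
    rw [Subgroup.mem_center_iff]
    intro c
    have hxF : (x : Γ ⧸ M₀') ∈ F := by
      rw [hψker]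
      exact hx
    have := (Subgroup.mem_centralizer_iff.mp c.2) (x : Γ ⧸ M₀') hxF
    exact Subtype.ext this.symm
  -- Step 6: splitting
  obtain ⟨s, hs⟩ := hsuper ↥C φC hφCsurj hφCker
  set S : Subgroup (Γ ⧸ M₀') := (C.subtype.comp s).range with hS
  have hsval : ∀ q, ψ ((s q : ↥C) : Γ ⧸ M₀') = q := by
    intro q
    exact DFunLike.congr_fun hs q
  -- F surjects onto the coset space Γ₁/S, so S has finite index
  have hsurjF : Function.Surjective (fun f : ↥F => (QuotientGroup.mk (f : Γ ⧸ M₀') : (Γ ⧸ M₀') ⧸ S)) := by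
    intro z
    obtain ⟨g, rfl⟩ := QuotientGroup.mk_surjective z
    have hmem : g * ((s (ψ g) : ↥C) : Γ ⧸ M₀')⁻¹ ∈ F := by
      rw [hψker]
      simp [map_mul, map_inv, hsval]
    refine ⟨⟨_, hmem⟩, ?_⟩
    show (QuotientGroup.mk (g * ((s (ψ g) : ↥C) : Γ ⧸ M₀')⁻¹) : (Γ ⧸ M₀') ⧸ S) = QuotientGroup.mk g
    rw [QuotientGroup.eq]
    refine ⟨ψ g, ?_⟩
    show ((s (ψ g) : ↥C) : Γ ⧸ M₀') =
      (g * ((s (ψ g) : ↥C) : Γ ⧸ M₀')⁻¹)⁻¹ * g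
    group
  haveI : Finite ((Γ ⧸ M₀') ⧸ S) := Finite.of_surjective _ hsurjF
  haveI hSfin : S.FiniteIndex := Subgroup.finiteIndex_of_finite_quotient
  -- S ∩ F is trivial
  have hSF : ∀ x : Γ ⧸ M₀', x ∈ S → x ∈ F → x = 1 := by
    intro x hxS hxF
    obtain ⟨q, hq⟩ := hxS
    have h1 : ψ x = 1 := (hψker x).mp hxF
    have h2 : q = 1 := by
      rw [← hsval q]
      show ψ ((C.subtype.comp s) q) = 1
      rw [hq, h1]
    rw [← hq, h2]
    simp
  -- Step 7: pull back to Γ and take the normal core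
  set K₁ : Subgroup Γ := S.comap π with hK₁
  haveI hK₁fin : K₁.FiniteIndex := by
    constructor
    rw [hK₁, Subgroup.index_comap_of_surjective _ (QuotientGroup.mk'_surjective M₀')]
    exact hSfin.index_ne_zero
  refine ⟨K₁.normalCore, inferInstance, inferInstance, ?_⟩
  intro n hn
  rw [Subgroup.mem_comap] at hn
  have hn1 : (N.subtype n) ∈ K₁ := K₁.normalCore_le hn
  have hn2 : π (N.subtype n) ∈ S := hn1
  have hn3 : π (N.subtype n) ∈ F := ⟨n, n.2, rfl⟩
  have hn4 : π (N.subtype n) = 1 := hSF _ hn2 hn3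
  have hn5 : (N.subtype n) ∈ M₀' := by
    have h : N.subtype n ∈ (QuotientGroup.mk' M₀').ker := MonoidHom.mem_ker.mpr hn4
    rwa [QuotientGroup.ker_mk'] at h
  have hn6 : n ∈ M₀ := by
    obtain ⟨m, hm, hmn⟩ := hn5
    have : m = n := N.subtype_injective hmn
    rwa [← this]
  exact hM₀M hn6

end ConditionB
/-- Let `1 → N → Γ → Q → 1` be a short exact sequence of finitely generated
groups where `Q = Γ/N` has no non-trivial finite quotients and is super-perfect
(`H₁(Q,ℤ) = H₂(Q,ℤ) = 0`; via the universal-coefficient theorem this is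
expressed by the splitting of all central extensions of `Q`).  Then the
inclusion `N ↪ Γ` induces an isomorphism of profinite completions
`N̂ → Γ̂` (a continuous bijective homomorphism of profinite groups, hence an
isomorphism of topological groups). -/
theorem statement4 {Γ : Type} [Group Γ] (hΓfg : Group.FG Γ)
    (N : Subgroup Γ) [N.Normal] (hNfg : Group.FG N)
    (hQ : ∀ (L : Subgroup (Γ ⧸ N)), L.Normal → L.FiniteIndex → L = ⊤)
    (hsuper : ∀ (M : Type) [Group M] (φ : M →* (Γ ⧸ N)), Function.Surjective φ →
      φ.ker ≤ Subgroup.center M → ∃ s : (Γ ⧸ N) →* M, φ.comp s = MonoidHom.id (Γ ⧸ N)) :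
    Function.Bijective (profiniteCompletionMap N.subtype) := by
  apply bijective_of_conditions
  · intro K g
    exact condition_a N hQ K g
  · intro M
    obtain ⟨K, hn, hf, hle⟩ := condition_b N hNfg hQ hsuper M.1 M.2.1 M.2.2
    exact ⟨⟨K, hn, hf⟩, hle⟩
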